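/- arXiv:1806.05282 — 2 statements merged into one kernel-verified Lean document; each statement's English description precedes it below -/
import Mathlib

section
/- For a standard normal random variable z and real constants a, b, the expectation E[z · min(1, e^{az+b})] equals a · e^{a²/2 + b} · Φ(−b/|a| − |a|), where Φ is the standard normal CDF (assume a ≠ 0). -/
open MeasureTheory Real

/-- Density of the standard normal distribution. -/
noncomputable def stdGaussianPdf (x : ℝ) : ℝ :=
  (Real.sqrt (2 * π))⁻¹ * Real.exp (-x ^ 2 / 2)

/-- Standard normal cumulative distribution function Φ. -/
noncomputable def stdNormalCDF (x : ℝ) : ℝ :=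
  ∫ t in Set.Iic x, stdGaussianPdf t

open Filter Set Topology

lemma phi_eq : stdGaussianPdf = fun x => (Real.sqrt (2 * π))⁻¹ * Real.exp (-(1/2) * x ^ 2) := by
  funext x; unfold stdGaussianPdf; rw [show (-x ^ 2 / 2 : ℝ) = -(1/2) * x ^ 2 by ring]

lemma continuous_phi : Continuous stdGaussianPdf := by
  unfold stdGaussianPdf
  exact continuous_const.mul ((continuous_pow 2).neg.div_const 2).rexp

lemma phi_nonneg (x : ℝ) : 0 ≤ stdGaussianPdf x := by
  unfold stdGaussianPdf
  positivity

lemma integrable_phi : Integrable stdGaussianPdf := by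
  rw [phi_eq]
  exact (integrable_exp_neg_mul_sq (by norm_num)).const_mul _

lemma integral_phi : ∫ x, stdGaussianPdf x = 1 := by
  rw [phi_eq]
  rw [MeasureTheory.integral_const_mul, integral_gaussian]
  rw [show π / (1/2) = 2 * π by ring]
  rw [inv_mul_cancel₀]
  positivity

lemma integrable_mul_phi : Integrable (fun x => x * stdGaussianPdf x) := by
  rw [phi_eq]
  have := (integrable_mul_exp_neg_mul_sq (b := 1/2) (by norm_num)).const_mul
    ((Real.sqrt (2 * π))⁻¹)
  refine this.congr (Eventually.of_forall fun x => ?_)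
  ring

lemma integrable_abs_mul_phi : Integrable (fun x => |x| * stdGaussianPdf x) := by
  refine integrable_mul_phi.abs.congr (Eventually.of_forall fun x => ?_)
  show |x * stdGaussianPdf x| = _
  rw [abs_mul, abs_of_nonneg (phi_nonneg x)]

lemma hasDerivAt_phi (x : ℝ) : HasDerivAt stdGaussianPdf (-x * stdGaussianPdf x) x := by
  have h : HasDerivAt (fun x : ℝ => -x ^ 2 / 2) (-x) x := by
    exact ((hasDerivAt_pow 2 x).neg.div_const 2).congr_deriv (by ring)
  have := (h.exp).const_mul ((Real.sqrt (2 * π))⁻¹)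
  refine this.congr_deriv ?_
  unfold stdGaussianPdf; ring

lemma hasDerivAt_CDF (x : ℝ) : HasDerivAt stdNormalCDF (stdGaussianPdf x) x := by
  have key : stdNormalCDF = fun z => stdNormalCDF 0 + ∫ t in (0:ℝ)..z, stdGaussianPdf t := by
    funext z
    rw [← intervalIntegral.integral_Iic_sub_Iic integrable_phi.integrableOn
      integrable_phi.integrableOn]
    unfold stdNormalCDF; ring
  rw [key]
  refine HasDerivAt.const_add _ ?_
  exact intervalIntegral.integral_hasDerivAt_right
    (integrable_phi.intervalIntegrable)
    ⟨Set.univ, Filter.univ_mem, continuous_phi.aestronglyMeasurable.restrict⟩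
    continuous_phi.continuousAt

lemma tendsto_phi_atTop : Tendsto stdGaussianPdf atTop (𝓝 0) := by
  have h : Tendsto (fun x : ℝ => -x ^ 2 / 2) atTop atBot := by
    apply Tendsto.atBot_div_const (by norm_num : (0:ℝ) < 2)
    exact tendsto_neg_atTop_atBot.comp (tendsto_pow_atTop two_ne_zero)
  have := (Real.tendsto_exp_atBot.comp h).const_mul ((Real.sqrt (2 * π))⁻¹)
  rw [mul_zero] at this
  exact this.congr fun x => rfl

lemma tendsto_phi_atBot : Tendsto stdGaussianPdf atBot (𝓝 0) := by
  have h2 : Tendsto (fun x : ℝ => x ^ 2) atBot atTop := by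
    have := (tendsto_pow_atTop (n := 2) two_ne_zero).comp (tendsto_neg_atBot_atTop : Tendsto (fun x : ℝ => -x) atBot atTop)
    refine this.congr fun x => ?_
    simp [Function.comp, neg_pow]
  have h : Tendsto (fun x : ℝ => -x ^ 2 / 2) atBot atBot := by
    apply Tendsto.atBot_div_const (by norm_num : (0:ℝ) < 2)
    exact tendsto_neg_atTop_atBot.comp h2
  have := (Real.tendsto_exp_atBot.comp h).const_mul ((Real.sqrt (2 * π))⁻¹)
  rw [mul_zero] at this
  exact this.congr fun x => rfl

lemma tendsto_CDF_atTop : Tendsto stdNormalCDF atTop (𝓝 1) := by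
  have key : ∀ z : ℝ, stdNormalCDF z = stdNormalCDF 0 + ∫ t in (0:ℝ)..z, stdGaussianPdf t := by
    intro z
    rw [← intervalIntegral.integral_Iic_sub_Iic integrable_phi.integrableOn
      integrable_phi.integrableOn]
    unfold stdNormalCDF; ring
  have h := intervalIntegral_tendsto_integral_Ioi 0 integrable_phi.integrableOn
    (tendsto_id (α := ℝ))
  have h2 : Tendsto (fun z => stdNormalCDF 0 + ∫ t in (0:ℝ)..z, stdGaussianPdf t) atTop
      (𝓝 (stdNormalCDF 0 + ∫ t in Ioi (0:ℝ), stdGaussianPdf t)) := tendsto_const_nhds.add h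
  have hone : stdNormalCDF 0 + ∫ t in Ioi (0:ℝ), stdGaussianPdf t = 1 := by
    unfold stdNormalCDF
    rw [intervalIntegral.integral_Iic_add_Ioi integrable_phi.integrableOn integrable_phi.integrableOn,
      integral_phi]
  rw [← hone]
  exact h2.congr (fun z => (key z).symm)

lemma tendsto_CDF_atBot : Tendsto stdNormalCDF atBot (𝓝 0) := by
  have key : ∀ z : ℝ, stdNormalCDF z = stdNormalCDF 0 - ∫ t in z..(0:ℝ), stdGaussianPdf t := by
    intro z
    rw [← intervalIntegral.integral_Iic_sub_Iic integrable_phi.integrableOn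
      integrable_phi.integrableOn]
    unfold stdNormalCDF; ring
  have h := intervalIntegral_tendsto_integral_Iic 0 integrable_phi.integrableOn
    (tendsto_id (α := ℝ))
  have h2 : Tendsto (fun z => stdNormalCDF 0 - ∫ t in z..(0:ℝ), stdGaussianPdf t) atBot
      (𝓝 (stdNormalCDF 0 - ∫ t in Iic (0:ℝ), stdGaussianPdf t)) := tendsto_const_nhds.sub h
  have : stdNormalCDF 0 - ∫ t in Iic (0:ℝ), stdGaussianPdf t = 0 := by
    unfold stdNormalCDF; ring
  rw [← this]
  exact h2.congr (fun z => (key z).symm)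

lemma CDF_neg (x : ℝ) : stdNormalCDF (-x) = 1 - stdNormalCDF x := by
  have h1 : stdNormalCDF (-x) = ∫ t in Ici x, stdGaussianPdf t := by
    unfold stdNormalCDF
    have h2 := integral_comp_neg_Iic (-x) stdGaussianPdf
    rw [neg_neg] at h2
    rw [MeasureTheory.integral_Ici_eq_integral_Ioi, ← h2]
    refine setIntegral_congr_fun measurableSet_Iic fun t _ => ?_
    unfold stdGaussianPdf
    rw [neg_sq]
  rw [h1, MeasureTheory.integral_Ici_eq_integral_Ioi]
  have := intervalIntegral.integral_Iic_add_Ioi (b := x) integrable_phi.integrableOn integrable_phi.integrableOn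
  rw [integral_phi] at this
  unfold stdNormalCDF
  linarith

lemma exp_mul_phi (a b z : ℝ) :
    Real.exp (a * z + b) * stdGaussianPdf z
      = Real.exp (a ^ 2 / 2 + b) * stdGaussianPdf (z - a) := by
  unfold stdGaussianPdf
  have h : ∀ u v : ℝ, Real.exp u * ((Real.sqrt (2 * π))⁻¹ * Real.exp v)
      = (Real.sqrt (2 * π))⁻¹ * Real.exp (u + v) := fun u v => by
    rw [Real.exp_add]; ring
  rw [h, h, show a * z + b + -z ^ 2 / 2 = a ^ 2 / 2 + b + -(z - a) ^ 2 / 2 by ring]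

lemma hasDerivAt_F1 (a b z : ℝ) :
    HasDerivAt (fun z => Real.exp (a ^ 2 / 2 + b) *
        (a * stdNormalCDF (z - a) - stdGaussianPdf (z - a)))
      (z * (Real.exp (a ^ 2 / 2 + b) * stdGaussianPdf (z - a))) z := by
  have h1 : HasDerivAt (fun z : ℝ => z - a) 1 z := (hasDerivAt_id z).sub_const a
  have h2 := (hasDerivAt_CDF (z - a)).comp z h1
  have h3 := (hasDerivAt_phi (z - a)).comp z h1
  have h4 := ((h2.const_mul a).sub h3).const_mul (Real.exp (a ^ 2 / 2 + b))
  exact h4.congr_deriv (by ring)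

lemma integrable_g (a K : ℝ) :
    Integrable (fun z => z * (K * stdGaussianPdf (z - a))) := by
  have h1 : Integrable (fun z => (z - a) * stdGaussianPdf (z - a)) :=
    integrable_mul_phi.comp_sub_right a
  have h2 : Integrable (fun z => stdGaussianPdf (z - a)) :=
    integrable_phi.comp_sub_right a
  refine ((h1.const_mul K).add ((h2.const_mul (K * a)))).congr
    (Eventually.of_forall fun z => ?_)
  simp only [Pi.add_apply]
  ring

lemma tendsto_sub_atBot (a : ℝ) : Tendsto (fun z : ℝ => z - a) atBot atBot :=
  (tendsto_atBot_add_const_right atBot (-a) tendsto_id).congr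
    fun x => (sub_eq_add_neg x a).symm

lemma tendsto_sub_atTop (a : ℝ) : Tendsto (fun z : ℝ => z - a) atTop atTop :=
  (tendsto_atTop_add_const_right atTop (-a) tendsto_id).congr
    fun x => (sub_eq_add_neg x a).symm

lemma tendsto_F1_atBot (a b : ℝ) :
    Tendsto (fun z => Real.exp (a ^ 2 / 2 + b) *
        (a * stdNormalCDF (z - a) - stdGaussianPdf (z - a))) atBot (𝓝 0) := by
  have := (((tendsto_CDF_atBot.comp (tendsto_sub_atBot a)).const_mul a).sub
    (tendsto_phi_atBot.comp (tendsto_sub_atBot a))).const_mul (Real.exp (a ^ 2 / 2 + b))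
  simpa using this

lemma tendsto_F1_atTop (a b : ℝ) :
    Tendsto (fun z => Real.exp (a ^ 2 / 2 + b) *
        (a * stdNormalCDF (z - a) - stdGaussianPdf (z - a))) atTop
      (𝓝 (Real.exp (a ^ 2 / 2 + b) * a)) := by
  have := (((tendsto_CDF_atTop.comp (tendsto_sub_atTop a)).const_mul a).sub
    (tendsto_phi_atTop.comp (tendsto_sub_atTop a))).const_mul (Real.exp (a ^ 2 / 2 + b))
  simpa using this

lemma hasDerivAt_F2 (z : ℝ) :
    HasDerivAt (fun z => -stdGaussianPdf z) (z * stdGaussianPdf z) z :=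
  (hasDerivAt_phi z).neg.congr_deriv (by ring)

lemma min_nonneg' (x : ℝ) : 0 ≤ min 1 (Real.exp x) :=
  le_min zero_le_one (Real.exp_pos x).le

lemma integrable_main (a b : ℝ) :
    Integrable (fun z => z * min 1 (Real.exp (a * z + b)) * stdGaussianPdf z) := by
  refine integrable_abs_mul_phi.mono' ?_ (Eventually.of_forall fun z => ?_)
  · exact ((continuous_id.mul (continuous_const.min
      ((continuous_const.mul continuous_id).add continuous_const).rexp)).mul
      continuous_phi).aestronglyMeasurable
  · have hm0 := min_nonneg' (a * z + b)
    have hm1 : min 1 (Real.exp (a * z + b)) ≤ 1 := min_le_left _ _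
    rw [Real.norm_eq_abs, abs_mul, abs_mul, abs_of_nonneg (phi_nonneg z),
      abs_of_nonneg hm0]
    calc |z| * min 1 (Real.exp (a * z + b)) * stdGaussianPdf z
        ≤ |z| * 1 * stdGaussianPdf z := by gcongr; exact phi_nonneg z
      _ = |z| * stdGaussianPdf z := by ring

/-- For z ~ N(0,1) and real a ≠ 0, b:
`E[z · min(1, e^{az+b})] = a e^{a²/2 + b} Φ(−b/|a| − |a|)`. -/
theorem stmt0 (a b : ℝ) (ha : a ≠ 0) :
    ∫ z : ℝ, z * min 1 (Real.exp (a * z + b)) * stdGaussianPdf z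
      = a * Real.exp (a ^ 2 / 2 + b) * stdNormalCDF (-b / |a| - |a|) := by
  set K := Real.exp (a ^ 2 / 2 + b) with hK
  set c := -b / a with hc
  have hac : a * c + b = 0 := by rw [hc]; field_simp; ring
  have hKphi : K * stdGaussianPdf (c - a) = stdGaussianPdf c := by
    rw [← exp_mul_phi a b c, hac, Real.exp_zero, one_mul]
  have hint := integrable_main a b
  rw [← intervalIntegral.integral_Iic_add_Ioi (b := c) hint.integrableOn hint.integrableOn]
  rcases ha.lt_or_gt with hA | hA
  · -- a < 0
    have habs : |a| = -a := abs_of_neg hA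
    have e1 : (∫ z in Iic c, z * min 1 (Real.exp (a * z + b)) * stdGaussianPdf z)
        = ∫ z in Iic c, z * stdGaussianPdf z := by
      refine setIntegral_congr_fun measurableSet_Iic fun z hz => ?_
      have h1 : a * c ≤ a * z := mul_le_mul_of_nonpos_left hz hA.le
      have h2 : (1:ℝ) ≤ Real.exp (a * z + b) := by
        rw [← Real.exp_zero]; exact Real.exp_le_exp.mpr (by linarith)
      rw [min_eq_left h2, mul_one]
    have e2 : (∫ z in Iic c, z * stdGaussianPdf z) = -stdGaussianPdf c - 0 :=
      integral_Iic_of_hasDerivAt_of_tendsto' (fun x _ => hasDerivAt_F2 x)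
        integrable_mul_phi.integrableOn (by simpa using tendsto_phi_atBot.neg)
    have e3 : (∫ z in Ioi c, z * min 1 (Real.exp (a * z + b)) * stdGaussianPdf z)
        = ∫ z in Ioi c, z * (K * stdGaussianPdf (z - a)) := by
      refine setIntegral_congr_fun measurableSet_Ioi fun z hz => ?_
      have h1 : a * z ≤ a * c := mul_le_mul_of_nonpos_left (le_of_lt hz) hA.le
      have h2 : Real.exp (a * z + b) ≤ 1 := by
        rw [← Real.exp_zero]; exact Real.exp_le_exp.mpr (by linarith)
      rw [min_eq_right h2, mul_assoc, exp_mul_phi]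
    have e4 : (∫ z in Ioi c, z * (K * stdGaussianPdf (z - a)))
        = K * a - K * (a * stdNormalCDF (c - a) - stdGaussianPdf (c - a)) :=
      integral_Ioi_of_hasDerivAt_of_tendsto' (fun x _ => hasDerivAt_F1 a b x)
        (integrable_g a K).integrableOn (tendsto_F1_atTop a b)
    rw [e1, e2, e3, e4]
    have harg : -b / |a| - |a| = -(c - a) := by rw [habs, hc]; field_simp; ring
    rw [harg, CDF_neg]
    have := hKphi
    nlinarith [this]
  · -- 0 < a
    have habs : |a| = a := abs_of_pos hA
    have e1 : (∫ z in Iic c, z * min 1 (Real.exp (a * z + b)) * stdGaussianPdf z)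
        = ∫ z in Iic c, z * (K * stdGaussianPdf (z - a)) := by
      refine setIntegral_congr_fun measurableSet_Iic fun z hz => ?_
      have h1 : a * z ≤ a * c := mul_le_mul_of_nonneg_left hz hA.le
      have h2 : Real.exp (a * z + b) ≤ 1 := by
        rw [← Real.exp_zero]; exact Real.exp_le_exp.mpr (by linarith)
      rw [min_eq_right h2, mul_assoc, exp_mul_phi]
    have e2 : (∫ z in Iic c, z * (K * stdGaussianPdf (z - a)))
        = K * (a * stdNormalCDF (c - a) - stdGaussianPdf (c - a)) - 0 :=
      integral_Iic_of_hasDerivAt_of_tendsto' (fun x _ => hasDerivAt_F1 a b x)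
        (integrable_g a K).integrableOn (tendsto_F1_atBot a b)
    have e3 : (∫ z in Ioi c, z * min 1 (Real.exp (a * z + b)) * stdGaussianPdf z)
        = ∫ z in Ioi c, z * stdGaussianPdf z := by
      refine setIntegral_congr_fun measurableSet_Ioi fun z hz => ?_
      have h1 : a * c ≤ a * z := mul_le_mul_of_nonneg_left (le_of_lt hz) hA.le
      have h2 : (1:ℝ) ≤ Real.exp (a * z + b) := by
        rw [← Real.exp_zero]; exact Real.exp_le_exp.mpr (by linarith)
      rw [min_eq_left h2, mul_one]
    have e4 : (∫ z in Ioi c, z * stdGaussianPdf z) = 0 - -stdGaussianPdf c :=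
      integral_Ioi_of_hasDerivAt_of_tendsto' (fun x _ => hasDerivAt_F2 x)
        integrable_mul_phi.integrableOn (by simpa using tendsto_phi_atTop.neg)
    rw [e1, e2, e3, e4]
    have harg : -b / |a| - |a| = c - a := by rw [habs, hc]
    rw [harg]
    nlinarith [hKphi]
end

section
/- For all real x, |min(1, eˣ) − min(1, 1+x)| ≤ x². -/
/-- For all real x, `|min(1, eˣ) − min(1, 1+x)| ≤ x²`. -/
theorem stmt7 (x : ℝ) :
    |min 1 (Real.exp x) - min 1 (1 + x)| ≤ x ^ 2 := by
  rcases le_or_gt 0 x with hx | hx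
  · rw [min_eq_left (Real.one_le_exp hx), min_eq_left (by linarith)]
    simpa using sq_nonneg x
  · rw [min_eq_right (Real.exp_le_one_iff.2 hx.le), min_eq_right (by linarith)]
    rcases le_or_gt (-1) x with h1 | h1
    · have := Real.abs_exp_sub_one_sub_id_le (x := x) (by rw [abs_le]; constructor <;> linarith)
      calc |Real.exp x - (1 + x)| = |Real.exp x - 1 - x| := by ring_nf
        _ ≤ x ^ 2 := this
    · have h2 : Real.exp x ≤ 1 := Real.exp_le_one_iff.2 hx.le
      have h3 : 1 + x ≤ Real.exp x := by linarith [Real.add_one_le_exp x]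
      rw [abs_of_nonneg (by linarith)]
      nlinarith [Real.exp_pos x]
end
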